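/- Let S and A be finite nonempty sets, Safe ⊆ S, p : S → A → S → ℝ a transition kernel with p(s,a,s') ≥ 0 and ∑_{s'} p(s,a,s') = 1 for all s, a, and π : ℝ^d → S → A → ℝ a parameterized policy with π(θ,s,a) > 0 and ∑_{a} π(θ,s,a) = 1 for all θ, s, such that θ ↦ π(θ,s,a) is differentiable for every s, a. Fix T ≥ 2 and an initial state s_0 ∈ Safe, and define W_t : ℝ^d → S → ℝ by W_T(θ,s) = ∑_{a} π(θ,s,a) ∑_{s'} p(s,a,s')·𝟙(s' ∈ Safe) and W_t(θ,s) = ∑_{a} π(θ,s,a) ∑_{s'} p(s,a,s')·𝟙(s' ∈ Safe)·W_{t+1}(θ,s') for 1 ≤ t ≤ T−1. For a full trajectory τ = (a_0, s_1, …, a_{T−1}, s_T) let q_θ(τ) = ∏_{t=0}^{T−1} π(θ,s_t,a_t)·p(s_t,a_t,s_{t+1}) and G_1(τ) = ∏_{t=1}^{T} 𝟙(s_t ∈ Safe); for a partial trajectory σ = (a_0, s_1, …, a_{T−2}, s_{T−1}) let q_θ^{(T−1)}(σ) = ∏_{t=0}^{T−2} π(θ,s_t,a_t)·p(s_t,a_t,s_{t+1}).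 Then for every θ: ∇_θ W_1(θ, s_0) = ∑_{t=0}^{T−2} ∑_{τ} q_θ(τ)·G_1(τ)·∇_θ log π(θ, s_t, a_t) + ∑_{σ} q_θ^{(T−1)}(σ)·(∏_{t=1}^{T−1} 𝟙(s_t ∈ Safe))·∇_θ W_T(θ, s_{T−1}). In expectation notation: ∇_θ E[G_1 | S_0] = ∑_{t=0}^{T−2} E[G_1·∇_θ log π_θ(A_t | S_t) | S_0] + E[∇_θ E[G_T | S_{T−1}]·∏_{t=1}^{T−1} 𝟙(S_t ∈ Safe) | S_0]. -/

import Mathlib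

set_option linter.unusedSectionVars false
set_option linter.unusedVariables false
set_option maxHeartbeats 1000000


open scoped BigOperators

noncomputable section

/-- Pad a finite tuple to a function on all of `ℕ` (values beyond `T` are arbitrary). -/
def pad {α : Type*} [Nonempty α] {T : ℕ} (f : Fin T → α) : ℕ → α :=
  fun n => if h : n < T then f ⟨n, h⟩ else Classical.arbitrary α

/-- The state sequence of a trajectory: `s_0 = s0` and `s_{m+1} = ss m`. -/
def stSeq {S : Type*} [Nonempty S] {T : ℕ} (s0 : S) (ss : Fin T → S) : ℕ → S
  | 0 => s0
  | (m + 1) => pad ss m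

/-- Indicator (as a real number) that a state is safe. -/
def safeInd {S : Type*} (Safe : Set S) [DecidablePred (· ∈ Safe)] (s : S) : ℝ :=
  if s ∈ Safe then 1 else 0

/-- Probability of the (partial) trajectory `(a_0, s_1, …, a_{T-1}, s_T)` starting from `s0`:
`∏_{t=0}^{T-1} π(θ, s_t, a_t) · p(s_t, a_t, s_{t+1})`. -/
def qTraj {S A : Type*} [Nonempty S] [Nonempty A] {d : ℕ}
    (p : S → A → S → ℝ) (pol : EuclideanSpace ℝ (Fin d) → S → A → ℝ)
    (s0 : S) (T : ℕ) (θ : EuclideanSpace ℝ (Fin d)) (τ : (Fin T → A) × (Fin T → S)) : ℝ :=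
  ∏ t ∈ Finset.range T,
    pol θ (stSeq s0 τ.2 t) (pad τ.1 t) * p (stSeq s0 τ.2 t) (pad τ.1 t) (stSeq s0 τ.2 (t + 1))

/-- Product of safety indicators `∏_{t=1}^{m} 𝟙(s_t ∈ Safe)` along a trajectory. -/
def safeProd {S : Type*} [Nonempty S] (Safe : Set S) [DecidablePred (· ∈ Safe)]
    (s0 : S) {T : ℕ} (ss : Fin T → S) (m : ℕ) : ℝ :=
  ∏ t ∈ Finset.Icc 1 m, safeInd Safe (stSeq s0 ss t)

/-- Backward value recursion: `Wk Safe p pol k θ s = W_{T-k}(θ, s)`, with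
`Wk 0 = W_T` the one-step safety probability. -/
def Wk {S A : Type*} [Fintype S] [Fintype A] {d : ℕ}
    (Safe : Set S) [DecidablePred (· ∈ Safe)]
    (p : S → A → S → ℝ) (pol : EuclideanSpace ℝ (Fin d) → S → A → ℝ) :
    ℕ → EuclideanSpace ℝ (Fin d) → S → ℝ
  | 0 => fun θ s => ∑ a, pol θ s a * ∑ s', p s a s' * safeInd Safe s'
  | (k + 1) => fun θ s =>
      ∑ a, pol θ s a * ∑ s', p s a s' * safeInd Safe s' * Wk Safe p pol k θ s'

section PadLemmas

variable {α : Type*} [Nonempty α] {T : ℕ}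

lemma pad_lt (f : Fin T → α) {n : ℕ} (h : n < T) : pad f n = f ⟨n, h⟩ := dif_pos h

lemma pad_cons_zero (x : α) (f : Fin T → α) : pad (Fin.cons x f) 0 = x := by
  rw [pad_lt (Fin.cons x f) (Nat.succ_pos T)]
  simp

lemma pad_cons_succ (x : α) (f : Fin T → α) (m : ℕ) :
    pad (Fin.cons x f) (m + 1) = pad f m := by
  by_cases h : m < T
  · rw [pad_lt (Fin.cons x f) (Nat.succ_lt_succ h), pad_lt f h]
    exact Fin.cons_succ (α := fun _ => α) x f ⟨m, h⟩
  · rw [pad, pad, dif_neg h, dif_neg (fun h' => h (Nat.lt_of_succ_lt_succ h'))]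

lemma pad_snoc_lt (f : Fin T → α) (x : α) {m : ℕ} (h : m < T) :
    pad (Fin.snoc f x) m = pad f m := by
  rw [pad_lt (Fin.snoc f x) (Nat.lt_succ_of_lt h), pad_lt f h]
  exact Fin.snoc_castSucc (α := fun _ => α) x f ⟨m, h⟩

lemma pad_snoc_last (f : Fin T → α) (x : α) : pad (Fin.snoc f x) T = x := by
  rw [pad_lt (Fin.snoc f x) (Nat.lt_succ_self T)]
  exact Fin.snoc_last (α := fun _ => α) x f

end PadLemmas

section StSeqLemmas

variable {S : Type*} [Nonempty S] {T : ℕ}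

lemma stSeq_cons_succ (s0 s1 : S) (ss : Fin T → S) (m : ℕ) :
    stSeq s0 (Fin.cons s1 ss) (m + 1) = stSeq s1 ss m := by
  cases m with
  | zero => exact pad_cons_zero s1 ss
  | succ k => exact pad_cons_succ s1 ss k

lemma stSeq_snoc_of_le (s0 s' : S) (ss : Fin T → S) {m : ℕ} (h : m ≤ T) :
    stSeq s0 (Fin.snoc ss s') m = stSeq s0 ss m := by
  cases m with
  | zero => rfl
  | succ k => exact pad_snoc_lt ss s' (Nat.lt_of_succ_le h)

lemma stSeq_snoc_last (s0 s' : S) (ss : Fin T → S) :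
    stSeq s0 (Fin.snoc ss s') (T + 1) = s' := pad_snoc_last ss s'

end StSeqLemmas

section SafeProdLemmas

variable {S : Type*} [Nonempty S] (Safe : Set S) [DecidablePred (· ∈ Safe)]

lemma safeProd_eq_range {T : ℕ} (s0 : S) (ss : Fin T → S) (m : ℕ) :
    safeProd Safe s0 ss m = ∏ t ∈ Finset.range m, safeInd Safe (stSeq s0 ss (t + 1)) := by
  rw [safeProd, ← Finset.Ico_add_one_right_eq_Icc, Finset.prod_Ico_eq_prod_range]
  simp [Nat.add_comm]

lemma safeProd_zero {T : ℕ} (s0 : S) (ss : Fin T → S) : safeProd Safe s0 ss 0 = 1 := by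
  simp [safeProd]

lemma safeProd_cons {k : ℕ} (s0 s1 : S) (ss : Fin k → S) :
    safeProd Safe s0 (Fin.cons s1 ss) (k + 1) = safeInd Safe s1 * safeProd Safe s1 ss k := by
  rw [safeProd_eq_range, safeProd_eq_range, Finset.prod_range_succ']
  rw [mul_comm]
  congr 1
  · exact Finset.prod_congr rfl fun t _ => by rw [stSeq_cons_succ]

lemma safeProd_snoc {k : ℕ} (s0 s' : S) (ss : Fin k → S) :
    safeProd Safe s0 (Fin.snoc ss s') (k + 1) = safeProd Safe s0 ss k * safeInd Safe s' := by
  rw [safeProd_eq_range, safeProd_eq_range, Finset.prod_range_succ]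
  congr 1
  · exact Finset.prod_congr rfl fun t ht => by
      rw [stSeq_snoc_of_le s0 s' ss (Nat.succ_le_of_lt (Finset.mem_range.mp ht))]
  · rw [stSeq_snoc_last]

end SafeProdLemmas

section QTrajLemmas

variable {S A : Type*} [Nonempty S] [Nonempty A] {d : ℕ}
variable (p : S → A → S → ℝ) (pol : EuclideanSpace ℝ (Fin d) → S → A → ℝ)

lemma qTraj_cons {k : ℕ} (s0 s1 : S) (a0 : A) (as : Fin k → A) (ss : Fin k → S)
    (θ : EuclideanSpace ℝ (Fin d)) :
    qTraj p pol s0 (k + 1) θ (Fin.cons a0 as, Fin.cons s1 ss) =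
      (pol θ s0 a0 * p s0 a0 s1) * qTraj p pol s1 k θ (as, ss) := by
  rw [qTraj, qTraj, Finset.prod_range_succ']
  rw [mul_comm]
  congr 1
  · exact Finset.prod_congr rfl fun t _ => by
      rw [stSeq_cons_succ, pad_cons_succ, stSeq_cons_succ]

lemma qTraj_snoc {k : ℕ} (s0 s' : S) (a : A) (as : Fin k → A) (ss : Fin k → S)
    (θ : EuclideanSpace ℝ (Fin d)) :
    qTraj p pol s0 (k + 1) θ (Fin.snoc as a, Fin.snoc ss s') =
      qTraj p pol s0 k θ (as, ss) *
        (pol θ (stSeq s0 ss k) a * p (stSeq s0 ss k) a s') := by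
  rw [qTraj, qTraj, Finset.prod_range_succ]
  congr 1
  · exact Finset.prod_congr rfl fun t ht => by
      have ht' := Finset.mem_range.mp ht
      rw [stSeq_snoc_of_le s0 s' ss (Nat.le_of_lt ht'), pad_snoc_lt as a ht',
        stSeq_snoc_of_le s0 s' ss (Nat.succ_le_of_lt ht')]
  · rw [stSeq_snoc_of_le s0 s' ss (le_refl k), pad_snoc_last, stSeq_snoc_last]

end QTrajLemmas

section Reindex

variable {S A : Type*} [Fintype S] [Fintype A] [Nonempty S] [Nonempty A]

lemma sum_cons_pair {β : Type*} [AddCommMonoid β] {k : ℕ}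
    (F : (Fin (k + 1) → A) × (Fin (k + 1) → S) → β) :
    ∑ τ : (Fin (k + 1) → A) × (Fin (k + 1) → S), F τ =
      ∑ a : A, ∑ s' : S, ∑ σ : (Fin k → A) × (Fin k → S),
        F (Fin.cons a σ.1, Fin.cons s' σ.2) := by
  rw [← Fintype.sum_equiv
    ((Equiv.prodProdProdComm A S (Fin k → A) (Fin k → S)).trans
      ((Fin.consEquiv (fun _ => A)).prodCongr (Fin.consEquiv (fun _ => S))))
    (fun x => F (Fin.cons x.1.1 x.2.1, Fin.cons x.1.2 x.2.2)) F (fun x => rfl)]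
  rw [Fintype.sum_prod_type, Fintype.sum_prod_type]

lemma sum_snoc_pair {β : Type*} [AddCommMonoid β] {k : ℕ}
    (F : (Fin (k + 1) → A) × (Fin (k + 1) → S) → β) :
    ∑ τ : (Fin (k + 1) → A) × (Fin (k + 1) → S), F τ =
      ∑ σ : (Fin k → A) × (Fin k → S), ∑ a : A, ∑ s' : S,
        F (Fin.snoc σ.1 a, Fin.snoc σ.2 s') := by
  rw [← Fintype.sum_equiv
    ((Equiv.prodProdProdComm (Fin k → A) (Fin k → S) A S).trans
      ((((Equiv.prodComm (Fin k → A) A).trans (Fin.snocEquiv (fun _ => A))).prodCongr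
        (((Equiv.prodComm (Fin k → S) S).trans (Fin.snocEquiv (fun _ => S)))))))
    (fun x => F (Fin.snoc x.1.1 x.2.1, Fin.snoc x.1.2 x.2.2)) F (fun x => rfl)]
  rw [Fintype.sum_prod_type]
  exact Finset.sum_congr rfl fun σ _ => Fintype.sum_prod_type _

end Reindex

section WkEq

variable {S A : Type*} [Fintype S] [Fintype A] [Nonempty S] [Nonempty A]
variable (Safe : Set S) [DecidablePred (· ∈ Safe)] {d : ℕ}
variable (p : S → A → S → ℝ) (pol : EuclideanSpace ℝ (Fin d) → S → A → ℝ)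

lemma wk_eq (k : ℕ) (θ : EuclideanSpace ℝ (Fin d)) (s : S) :
    Wk Safe p pol k θ s =
      ∑ τ : (Fin (k + 1) → A) × (Fin (k + 1) → S),
        qTraj p pol s (k + 1) θ τ * safeProd Safe s τ.2 (k + 1) := by
  induction k generalizing s with
  | zero =>
    rw [sum_cons_pair (fun τ => qTraj p pol s 1 θ τ * safeProd Safe s τ.2 1)]
    show Wk Safe p pol 0 θ s = _
    rw [Wk]
    refine Finset.sum_congr rfl fun a _ => ?_
    rw [Finset.mul_sum]
    refine Finset.sum_congr rfl fun s' _ => ?_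
    haveI : Unique (Fin 0 → A) := ⟨⟨Fin.elim0⟩, fun f => funext fun i => i.elim0⟩
    haveI : Unique (Fin 0 → S) := ⟨⟨Fin.elim0⟩, fun f => funext fun i => i.elim0⟩
    haveI : Unique ((Fin 0 → A) × (Fin 0 → S)) :=
      ⟨⟨(default, default)⟩, fun x =>
        Prod.ext (funext fun i => i.elim0) (funext fun i => i.elim0)⟩
    rw [Fintype.sum_unique]
    rw [qTraj_cons, safeProd_cons]
    have h1 : ∀ x : (Fin 0 → A) × (Fin 0 → S), qTraj p pol s' 0 θ x = 1 := by
      intro x; simp [qTraj]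
    rw [h1, safeProd_zero]
    ring
  | succ k ih =>
    rw [sum_cons_pair (fun τ => qTraj p pol s (k + 2) θ τ * safeProd Safe s τ.2 (k + 2))]
    show Wk Safe p pol (k + 1) θ s = _
    rw [Wk]
    refine Finset.sum_congr rfl fun a _ => ?_
    rw [Finset.mul_sum]
    refine Finset.sum_congr rfl fun s' _ => ?_
    rw [ih s', Finset.mul_sum, Finset.mul_sum]
    refine Finset.sum_congr rfl fun σ _ => ?_
    rw [qTraj_cons, safeProd_cons]
    ring

end WkEq

section Grad

variable {S A : Type*} [Fintype S] [Fintype A] [Nonempty S] [Nonempty A]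
variable (Safe : Set S) [DecidablePred (· ∈ Safe)] {d : ℕ}
variable (p : S → A → S → ℝ) (pol : EuclideanSpace ℝ (Fin d) → S → A → ℝ)

lemma gradient_eq_toDual (f : EuclideanSpace ℝ (Fin d) → ℝ) (x : EuclideanSpace ℝ (Fin d)) :
    gradient f x =
      (InnerProductSpace.toDual ℝ (EuclideanSpace ℝ (Fin d))).symm (fderiv ℝ f x) := rfl

lemma my_gradient_sum {ι : Type*} (u : Finset ι) (f : ι → EuclideanSpace ℝ (Fin d) → ℝ)
    (x : EuclideanSpace ℝ (Fin d)) (h : ∀ i ∈ u, DifferentiableAt ℝ (f i) x) :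
    gradient (fun y => ∑ i ∈ u, f i y) x = ∑ i ∈ u, gradient (f i) x := by
  rw [gradient_eq_toDual, fderiv_fun_sum h, map_sum]
  rfl

lemma my_gradient_mul_const (f : EuclideanSpace ℝ (Fin d) → ℝ) (c : ℝ)
    (x : EuclideanSpace ℝ (Fin d)) (h : DifferentiableAt ℝ f x) :
    gradient (fun y => f y * c) x = c • gradient f x := by
  rw [gradient_eq_toDual, fderiv_mul_const h, map_smul]
  rfl

lemma hasFDerivAt_qTraj (hpold : ∀ s a, Differentiable ℝ (fun θ => pol θ s a))
    (s0 : S) (k : ℕ) (θ : EuclideanSpace ℝ (Fin d)) (τ : (Fin k → A) × (Fin k → S)) :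
    HasFDerivAt (fun θ' => qTraj p pol s0 k θ' τ)
      (∑ t ∈ Finset.range k,
        (∏ j ∈ (Finset.range k).erase t,
            (pol θ (stSeq s0 τ.2 j) (pad τ.1 j) *
              p (stSeq s0 τ.2 j) (pad τ.1 j) (stSeq s0 τ.2 (j + 1)))) •
          (p (stSeq s0 τ.2 t) (pad τ.1 t) (stSeq s0 τ.2 (t + 1)) •
            fderiv ℝ (fun θ' => pol θ' (stSeq s0 τ.2 t) (pad τ.1 t)) θ)) θ :=
  HasFDerivAt.finset_prod fun t _ =>
    ((hpold _ _).differentiableAt.hasFDerivAt).mul_const _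

lemma grad_qTraj (hpol0 : ∀ θ s a, 0 < pol θ s a)
    (hpold : ∀ s a, Differentiable ℝ (fun θ => pol θ s a))
    (s0 : S) (k : ℕ) (θ : EuclideanSpace ℝ (Fin d)) (τ : (Fin k → A) × (Fin k → S)) :
    gradient (fun θ' => qTraj p pol s0 k θ' τ) θ =
      ∑ t ∈ Finset.range k,
        (qTraj p pol s0 k θ τ * (pol θ (stSeq s0 τ.2 t) (pad τ.1 t))⁻¹) •
          gradient (fun θ' => pol θ' (stSeq s0 τ.2 t) (pad τ.1 t)) θ := by
  rw [gradient_eq_toDual, (hasFDerivAt_qTraj p pol hpold s0 k θ τ).fderiv, map_sum]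
  refine Finset.sum_congr rfl fun t ht => ?_
  rw [smul_smul, map_smul]
  congr 1
  have hne : pol θ (stSeq s0 τ.2 t) (pad τ.1 t) ≠ 0 := (hpol0 θ _ _).ne'
  have hq : qTraj p pol s0 k θ τ =
      (pol θ (stSeq s0 τ.2 t) (pad τ.1 t) *
          p (stSeq s0 τ.2 t) (pad τ.1 t) (stSeq s0 τ.2 (t + 1))) *
        ∏ j ∈ (Finset.range k).erase t,
          (pol θ (stSeq s0 τ.2 j) (pad τ.1 j) *
            p (stSeq s0 τ.2 j) (pad τ.1 j) (stSeq s0 τ.2 (j + 1))) :=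
    (Finset.mul_prod_erase (Finset.range k) _ ht).symm
  rw [hq]
  field_simp

lemma grad_Wk0 (hpold : ∀ s a, Differentiable ℝ (fun θ => pol θ s a))
    (θ : EuclideanSpace ℝ (Fin d)) (s : S) :
    gradient (fun θ' => Wk Safe p pol 0 θ' s) θ =
      ∑ a, (∑ s', p s a s' * safeInd Safe s') • gradient (fun θ' => pol θ' s a) θ := by
  have h : (fun θ' => Wk Safe p pol 0 θ' s) =
      fun θ' => ∑ a, pol θ' s a * ∑ s', p s a s' * safeInd Safe s' := rfl
  rw [h, my_gradient_sum _ _ _ (fun a _ => ((hpold s a).differentiableAt).mul_const _)]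
  exact Finset.sum_congr rfl fun a _ =>
    my_gradient_mul_const _ _ _ ((hpold s a).differentiableAt)

end Grad
/-- Lemma 4 of the paper: unrolled form of the gradient of `W_1(θ, s_0) = E[G_1 | S_0 = s_0]`:
`∇_θ E[G_1 | S_0] = ∑_{t=0}^{T-2} E[G_1 ∇_θ log π_θ(A_t | S_t) | S_0]
  + E[∇_θ E[G_T | S_{T-1}] ∏_{t=1}^{T-1} 𝟙(S_t ∈ Safe) | S_0]`. -/
theorem gradient_W1_unrolled
    {S A : Type*} [Fintype S] [Fintype A] [Nonempty S] [Nonempty A]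
    (Safe : Set S) [DecidablePred (· ∈ Safe)] (d : ℕ)
    (p : S → A → S → ℝ)
    (hp0 : ∀ s a s', 0 ≤ p s a s') (hp1 : ∀ s a, ∑ s', p s a s' = 1)
    (pol : EuclideanSpace ℝ (Fin d) → S → A → ℝ)
    (hpol0 : ∀ θ s a, 0 < pol θ s a) (hpol1 : ∀ θ s, ∑ a, pol θ s a = 1)
    (hpold : ∀ s a, Differentiable ℝ (fun θ => pol θ s a))
    (T : ℕ) (hT : 2 ≤ T) (s0 : S) (hs0 : s0 ∈ Safe) :
    ∀ θ : EuclideanSpace ℝ (Fin d),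
      gradient (fun θ' => Wk Safe p pol (T - 1) θ' s0) θ =
        (∑ t ∈ Finset.range (T - 1),
          ∑ τ : (Fin T → A) × (Fin T → S),
            (qTraj p pol s0 T θ τ * safeProd Safe s0 τ.2 T) •
              ((pol θ (stSeq s0 τ.2 t) (pad τ.1 t))⁻¹ •
                gradient (fun θ' => pol θ' (stSeq s0 τ.2 t) (pad τ.1 t)) θ))
        + ∑ σ : (Fin (T - 1) → A) × (Fin (T - 1) → S),
            (qTraj p pol s0 (T - 1) θ σ * safeProd Safe s0 σ.2 (T - 1)) •
              gradient (fun θ' => Wk Safe p pol 0 θ' (stSeq s0 σ.2 (T - 1))) θ := by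
  intro θ
  obtain ⟨n, rfl⟩ : ∃ n, T = n + 2 := ⟨T - 2, by omega⟩
  simp only [show n + 2 - 1 = n + 1 from rfl]
  have hdiffq : ∀ (k : ℕ) (s : S) (τ : (Fin k → A) × (Fin k → S)),
      DifferentiableAt ℝ (fun θ' => qTraj p pol s k θ' τ) θ :=
    fun k s τ => (hasFDerivAt_qTraj p pol hpold s k θ τ).differentiableAt
  have hW : (fun θ' => Wk Safe p pol (n + 1) θ' s0) =
      fun θ' => ∑ τ : (Fin (n + 2) → A) × (Fin (n + 2) → S),
        qTraj p pol s0 (n + 2) θ' τ * safeProd Safe s0 τ.2 (n + 2) :=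
    funext fun θ' => wk_eq Safe p pol (n + 1) θ' s0
  rw [hW]
  have hg : gradient (fun θ' => ∑ τ : (Fin (n + 2) → A) × (Fin (n + 2) → S),
        qTraj p pol s0 (n + 2) θ' τ * safeProd Safe s0 τ.2 (n + 2)) θ =
      ∑ τ : (Fin (n + 2) → A) × (Fin (n + 2) → S),
        gradient (fun θ' => qTraj p pol s0 (n + 2) θ' τ * safeProd Safe s0 τ.2 (n + 2)) θ :=
    my_gradient_sum _ _ _ (fun τ _ => (hdiffq _ _ τ).mul_const _)
  rw [hg]
  have hsum : ∀ τ : (Fin (n + 2) → A) × (Fin (n + 2) → S),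
      gradient (fun θ' => qTraj p pol s0 (n + 2) θ' τ * safeProd Safe s0 τ.2 (n + 2)) θ =
      ∑ t ∈ Finset.range (n + 2),
        (qTraj p pol s0 (n + 2) θ τ * safeProd Safe s0 τ.2 (n + 2) *
          (pol θ (stSeq s0 τ.2 t) (pad τ.1 t))⁻¹) •
          gradient (fun θ' => pol θ' (stSeq s0 τ.2 t) (pad τ.1 t)) θ := by
    intro τ
    rw [my_gradient_mul_const _ _ _ (hdiffq _ _ τ), grad_qTraj p pol hpol0 hpold s0 _ θ τ,
      Finset.smul_sum]
    refine Finset.sum_congr rfl fun t _ => ?_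
    rw [smul_smul]
    congr 1
    ring
  rw [Finset.sum_congr rfl (fun τ _ => hsum τ)]
  rw [Finset.sum_comm]
  rw [show Finset.range (n + 2) = Finset.range (n + 1 + 1) from rfl,
    Finset.sum_range_succ]
  congr 1
  · refine Finset.sum_congr rfl fun t _ => Finset.sum_congr rfl fun τ _ => ?_
    rw [smul_smul]
  · rw [sum_snoc_pair (fun τ : (Fin (n + 2) → A) × (Fin (n + 2) → S) =>
      (qTraj p pol s0 (n + 2) θ τ * safeProd Safe s0 τ.2 (n + 2) *
        (pol θ (stSeq s0 τ.2 (n + 1)) (pad τ.1 (n + 1)))⁻¹) •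
        gradient (fun θ' => pol θ' (stSeq s0 τ.2 (n + 1)) (pad τ.1 (n + 1))) θ)]
    refine Finset.sum_congr rfl fun σ _ => ?_
    rw [grad_Wk0 Safe p pol hpold θ (stSeq s0 σ.2 (n + 1)), Finset.smul_sum]
    have hst : ∀ s' : S, stSeq s0 (Fin.snoc σ.2 s') (n + 1) = stSeq s0 σ.2 (n + 1) :=
      fun s' => stSeq_snoc_of_le s0 s' σ.2 (le_refl (n + 1))
    refine Finset.sum_congr rfl fun a _ => ?_
    simp only [qTraj_snoc, safeProd_snoc, hst, pad_snoc_last]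
    rw [← Finset.sum_smul, smul_smul]
    congr 1
    rw [Finset.mul_sum]
    refine Finset.sum_congr rfl fun s' _ => ?_
    have hne : pol θ (stSeq s0 σ.2 (n + 1)) a ≠ 0 := (hpol0 θ _ _).ne'
    field_simp
    have hq : qTraj p pol s0 (n + 2 - 1) θ σ = qTraj p pol s0 (n + 1) θ (σ.1, σ.2) := rfl
    rw [hq]
    ring

end
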